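/- Let y : ℤ → ℝ be a sequence of positive reals satisfying the q-Painlevé II recurrence y_{n+5} y_n (1/y_{n+3} + 1)(1/y_{n+2} + 1) = (y_{n+4} + 1)(y_{n+1} + 1) for all n ∈ ℤ. Then the quantity u_n := y_{n+4} (1/y_{n+1} + 1) / (y_n (1/y_{n+3} + 1)) is a conserved quantity, i.e., u_{n+1} = u_n for all n ∈ ℤ. -/

import Mathlib

/-- For positive solutions of the q-Painlevé II recurrence,
`u n := y (n+4) * (1/y (n+1) + 1) / (y n * (1/y (n+3) + 1))` is conserved. -/
theorem qPII_conserved_u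
    (y : ℤ → ℝ) (hy : ∀ n : ℤ, 0 < y n)
    (hrec : ∀ n : ℤ,
      y (n + 5) * y n * (1 / y (n + 3) + 1) * (1 / y (n + 2) + 1) =
        (y (n + 4) + 1) * (y (n + 1) + 1)) :
    ∀ n : ℤ,
      y (n + 1 + 4) * (1 / y (n + 1 + 1) + 1) / (y (n + 1) * (1 / y (n + 1 + 3) + 1)) =
        y (n + 4) * (1 / y (n + 1) + 1) / (y n * (1 / y (n + 3) + 1)) := by
  intro n
  have e1 : n + 1 + 4 = n + 5 := by ring
  have e2 : n + 1 + 1 = n + 2 := by ring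
  have e3 : n + 1 + 3 = n + 4 := by ring
  rw [e1, e2, e3]
  have h := hrec n
  have h0 := (hy n).ne'
  have h1 := (hy (n + 1)).ne'
  have h2 := (hy (n + 2)).ne'
  have h3 := (hy (n + 3)).ne'
  have h4 := (hy (n + 4)).ne'
  have h5 := (hy (n + 5)).ne'
  have d1 : 0 < y (n + 1) * (1 / y (n + 4) + 1) := by
    have := hy (n + 1); have := one_div_pos.mpr (hy (n + 4)); positivity
  have d2 : 0 < y n * (1 / y (n + 3) + 1) := by
    have := hy n; have := one_div_pos.mpr (hy (n + 3)); positivity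
  rw [div_eq_div_iff d1.ne' d2.ne']
  field_simp at h ⊢
  linear_combination h
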